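/- Let a, c, d ∈ ℂ and b, e ∈ ℝ. Suppose that for all λ ∈ ℂ, F(λ) := 2·Re(|λ|²·λ·a) + 4·|λ|²·b + 2·Re(λ²·c) + 2·Re(λ·d) + e ≤ 0. Then a = 0. -/

import Mathlib

/-- Leading-coefficient extraction: if
`F(l) = 2·Re(|l|²·l·a) + 4·|l|²·b + 2·Re(l²·c) + 2·Re(l·d) + e ≤ 0` for all `l ∈ ℂ`,
then `a = 0`. -/
theorem cubic_coeff_vanishes (a c d : ℂ) (b e : ℝ)
    (h : ∀ l : ℂ,
      2 * (((‖l‖ : ℂ) ^ 2) * l * a).re + 4 * (‖l‖) ^ 2 * b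
        + 2 * (l ^ 2 * c).re + 2 * (l * d).re + e ≤ 0) :
    a = 0 := by
  by_contra ha
  set A : ℝ := 2 * (‖a‖) ^ 4 with hA
  set B : ℝ := 4 * (‖a‖) ^ 2 * b + 2 * ((starRingEnd ℂ a) ^ 2 * c).re with hB
  set C : ℝ := 2 * ((starRingEnd ℂ a) * d).re with hC
  have hApos : 0 < A := by
    have h0 : 0 < ‖a‖ := norm_pos_iff.mpr ha
    have := pow_pos h0 4
    linarith
  have key : ∀ t : ℝ, 0 ≤ t → A * t ^ 3 + B * t ^ 2 + C * t + e ≤ 0 := by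
    intro t ht
    have h1 := h ((t : ℂ) * starRingEnd ℂ a)
    have habs : ‖(t:ℂ) * starRingEnd ℂ a‖ = t * ‖a‖ := by
      simp [map_mul, Complex.norm_real, Real.norm_eq_abs, abs_of_nonneg ht]
    rw [habs] at h1
    have hca : (starRingEnd ℂ a) * a = ((‖a‖ : ℂ))^2 := Complex.conj_mul' a
    have h2 : ((((t * ‖a‖ : ℝ)) : ℂ) ^ 2 * ((t:ℂ) * starRingEnd ℂ a) * a).re
        = A / 2 * t ^ 3 := by
      have : ((((t * ‖a‖ : ℝ)) : ℂ) ^ 2 * ((t:ℂ) * starRingEnd ℂ a) * a)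
          = ((t^3 * (‖a‖)^4 : ℝ) : ℂ) := by
        push_cast
        rw [mul_assoc, mul_assoc, hca]
        ring
      rw [this, Complex.ofReal_re, hA]
      ring
    have h3 : (((t:ℂ) * starRingEnd ℂ a) ^ 2 * c).re = t ^ 2 * ((starRingEnd ℂ a) ^ 2 * c).re := by
      have : (((t:ℂ) * starRingEnd ℂ a) ^ 2 * c) = ((t^2 : ℝ) : ℂ) * ((starRingEnd ℂ a) ^ 2 * c) := by
        push_cast; ring
      rw [this, Complex.re_ofReal_mul]
    have h4 : (((t:ℂ) * starRingEnd ℂ a) * d).re = t * ((starRingEnd ℂ a) * d).re := by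
      have : (((t:ℂ) * starRingEnd ℂ a) * d) = ((t : ℝ) : ℂ) * ((starRingEnd ℂ a) * d) := by
        ring
      rw [this, Complex.re_ofReal_mul]
    rw [h2, h3, h4] at h1
    nlinarith [h1]
  set t : ℝ := max 1 ((|B| + |C| + |e| + 1) / A) with hT
  have ht1 : (1:ℝ) ≤ t := le_max_left _ _
  have ht0 : 0 ≤ t := by linarith
  have htA : |B| + |C| + |e| + 1 ≤ A * t := by
    have := le_max_right 1 ((|B| + |C| + |e| + 1) / A)
    calc |B| + |C| + |e| + 1 = A * ((|B| + |C| + |e| + 1) / A) := by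
          field_simp
      _ ≤ A * t := by
          apply mul_le_mul_of_nonneg_left this (le_of_lt hApos)
  have hk := key t ht0
  nlinarith [abs_nonneg B, abs_nonneg C, abs_nonneg e, neg_abs_le B, neg_abs_le C, neg_abs_le e,
    sq_nonneg t, mul_le_mul_of_nonneg_right htA (sq_nonneg t), le_abs_self B, le_abs_self C, le_abs_self e,
    mul_le_mul_of_nonneg_left ht1 ht0]
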